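/- If Δ ≡ 4 (mod 32) is a negative discriminant and k ≥ 3 is an integer with |Δ| ≥ 2^{2k+2}, then there exists an integer b with 0 ≤ b ≤ 2^k, ν₂(b) = 1, and Δ ≡ b² (mod 2^{k+2}), such that (2^k, b, (b² − Δ)/2^{k+2}) is a reduced form of discriminant Δ. In particular 2^k is suitable for Δ. -/

import Mathlib

/-- Hensel-style lifting: square roots of `m ≡ 1 (mod 8)` exist modulo every `2^j`, `j ≥ 3`. -/
theorem sqrt_mod_pow_two (m : ℤ) (hm : m % 8 = 1) :
    ∀ j : ℕ, ∃ u : ℤ, u % 2 = 1 ∧ (2 : ℤ) ^ (j + 3) ∣ u ^ 2 - m := by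
  intro j
  induction j with
  | zero => exact ⟨1, by norm_num, by norm_num; omega⟩
  | succ n ih =>
    obtain ⟨u, hu, t, ht⟩ := ih
    rcases Int.even_or_odd t with ⟨s, hs⟩ | ⟨s, hs⟩
    · exact ⟨u, hu, s, by rw [show n+1+3 = (n+3)+1 by omega, pow_succ]
                          linear_combination ht + 2 ^ (n+3) * hs⟩
    · obtain ⟨a, ha⟩ : ∃ a, u = 2 * a + 1 := ⟨u / 2, by omega⟩
      refine ⟨u + 2 ^ (n + 2), ?_, s + a + 1 + 2 ^ n, ?_⟩
      · have h2 : (2:ℤ) ^ (n + 2) = 2 * 2 ^ (n + 1) := by ring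
        omega
      · linear_combination ht + 2 ^ (n + 3) * hs + 2 ^ (n + 3) * ha

/-- A triple `(A, B, C)` is a reduced form of discriminant `Δ` if `gcd(A,B,C) = 1`,
`B² − 4AC = Δ`, and either `−A < B ≤ A < C` or `0 ≤ B ≤ A = C`. -/
def IsReducedForm (Δ A B C : ℤ) : Prop :=
  Int.gcd A (Int.gcd B C) = 1 ∧ B ^ 2 - 4 * A * C = Δ ∧
    ((-A < B ∧ B ≤ A ∧ A < C) ∨ (0 ≤ B ∧ B ≤ A ∧ A = C))

/-- If `Δ ≡ 4 (mod 32)` is a negative discriminant and `k ≥ 3` with `|Δ| ≥ 2^{2k+2}`,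
then there is an integer `b` with `0 ≤ b ≤ 2^k`, `ν₂(b) = 1`, `Δ ≡ b² (mod 2^{k+2})`,
such that `(2^k, b, (b² − Δ)/2^{k+2})` is a reduced form of discriminant `Δ`;
in particular `2^k` is suitable for `Δ`. -/
theorem suitable_power_of_two (Δ : ℤ) (k : ℕ)
    (hΔneg : Δ < 0) (hΔmod : Δ % 32 = 4)
    (hk : 3 ≤ k) (hbig : (2 : ℤ) ^ (2 * k + 2) ≤ |Δ|) :
    ∃ b : ℤ, 0 ≤ b ∧ b ≤ 2 ^ k ∧ (2 ∣ b ∧ ¬ (4 ∣ b)) ∧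
      Δ ≡ b ^ 2 [ZMOD 2 ^ (k + 2)] ∧
      IsReducedForm Δ (2 ^ k) b ((b ^ 2 - Δ) / 2 ^ (k + 2)) := by
  obtain ⟨n, rfl⟩ : ∃ n, k = n + 3 := ⟨k - 3, by omega⟩
  obtain ⟨m, hm4⟩ : ∃ m, Δ = 4 * m := ⟨Δ / 4, by omega⟩
  have hm8 : m % 8 = 1 := by omega
  have hmneg : m < 0 := by omega
  have hPk1 : (2:ℤ) ^ (n + 3) = 2 * 2 ^ (n + 2) := by ring
  have hPpos : (0:ℤ) < 2 ^ (n + 3) := by positivity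
  -- step 1: a square root of m mod 2^(n+3) that is not a square root mod 2^(n+4)
  obtain ⟨u₁, h₁odd, h₁dvd, h₁ndvd⟩ :
      ∃ u : ℤ, u % 2 = 1 ∧ (2:ℤ) ^ (n + 3) ∣ u ^ 2 - m ∧ ¬ (2:ℤ) ^ (n + 4) ∣ u ^ 2 - m := by
    obtain ⟨u₀, hu₀odd, hu₀⟩ := sqrt_mod_pow_two m hm8 n
    by_cases h : (2:ℤ) ^ (n + 4) ∣ u₀ ^ 2 - m
    · obtain ⟨d, hd⟩ := h
      have heven : (2:ℤ) ^ (n + 2) = 2 * 2 ^ (n + 1) := by ring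
      refine ⟨u₀ + 2 ^ (n + 2), by omega, ⟨2 * d + u₀ + 2 ^ (n + 1), by linear_combination hd⟩, ?_⟩
      rintro ⟨c, hc⟩
      -- then 2^(n+3) * u₀ ≡ 0 mod 2^(n+4), forcing u₀ even
      have key : u₀ = 2 * (c - d - 2 ^ n) := by
        refine mul_left_cancel₀ (a := (2:ℤ) ^ (n + 3)) (by positivity) ?_
        linear_combination hc - hd
      omega
    · exact ⟨u₀, hu₀odd, hu₀, h⟩
  -- step 2: reduce modulo 2^(n+3)
  obtain ⟨u₂, h₂odd, h₂lb, h₂ub, h₂dvd, h₂ndvd⟩ :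
      ∃ u : ℤ, u % 2 = 1 ∧ 0 ≤ u ∧ u < 2 ^ (n + 3) ∧
        (2:ℤ) ^ (n + 3) ∣ u ^ 2 - m ∧ ¬ (2:ℤ) ^ (n + 4) ∣ u ^ 2 - m := by
    refine ⟨u₁ % 2 ^ (n + 3), ?_, Int.emod_nonneg _ (by positivity), Int.emod_lt_of_pos _ hPpos,
      ?_, ?_⟩
    · rw [Int.emod_emod_of_dvd _ ⟨2 ^ (n + 2), hPk1⟩]; exact h₁odd
    all_goals
      have hq : u₁ % 2 ^ (n + 3) = u₁ - 2 ^ (n + 3) * (u₁ / 2 ^ (n + 3)) := Int.emod_def _ _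
      have hodd : u₁ % 2 ^ (n + 3) % 2 = 1 := by
        rw [Int.emod_emod_of_dvd _ ⟨2 ^ (n + 2), hPk1⟩]; exact h₁odd
      obtain ⟨c, hc⟩ : ∃ c, u₁ % 2 ^ (n + 3) + u₁ = 2 * c := ⟨(u₁ % 2 ^ (n+3) + u₁)/2, by omega⟩
      have key : (2:ℤ) ^ (n + 4) ∣ (u₁ % 2 ^ (n + 3)) ^ 2 - u₁ ^ 2 :=
        ⟨-((u₁ / 2 ^ (n + 3)) * c), by
          linear_combination (u₁ % 2 ^ (n+3) + u₁) * hq - 2 ^ (n+3) * (u₁ / 2 ^ (n+3)) * hc⟩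
    · obtain ⟨e, he⟩ := key
      obtain ⟨f, hf⟩ := h₁dvd
      exact ⟨2 * e + f, by linear_combination he + hf⟩
    · intro hcon
      exact h₁ndvd (by
        obtain ⟨e, he⟩ := key
        obtain ⟨g, hg⟩ := hcon
        exact ⟨g - e, by linear_combination hg - he⟩)
  -- step 3: fold into [0, 2^(n+2)]
  obtain ⟨u, hodd, hpos, hub, hdvd, hndvd⟩ :
      ∃ u : ℤ, u % 2 = 1 ∧ 0 < u ∧ 2 * u ≤ 2 ^ (n + 3) ∧
        (2:ℤ) ^ (n + 3) ∣ u ^ 2 - m ∧ ¬ (2:ℤ) ^ (n + 4) ∣ u ^ 2 - m := by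
    by_cases h : 2 * u₂ ≤ 2 ^ (n + 3)
    · exact ⟨u₂, h₂odd, by omega, h, h₂dvd, h₂ndvd⟩
    · have key : (2:ℤ) ^ (n + 4) ∣ (2 ^ (n + 3) - u₂) ^ 2 - u₂ ^ 2 :=
        ⟨2 ^ (n + 2) - u₂, by ring⟩
      obtain ⟨e, he⟩ := key
      refine ⟨2 ^ (n + 3) - u₂, by omega, by omega, by omega, ?_, ?_⟩
      · obtain ⟨f, hf⟩ := h₂dvd
        exact ⟨2 * e + f, by linear_combination he + hf⟩
      · intro hcon
        exact h₂ndvd (by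
          obtain ⟨g, hg⟩ := hcon
          exact ⟨g - e, by linear_combination hg - he⟩)
  -- assemble
  obtain ⟨c, hc⟩ := hdvd
  have hcodd : c % 2 = 1 := by
    rcases Int.even_or_odd c with ⟨s, hs⟩ | ⟨s, hs⟩
    · exact absurd ⟨s, by linear_combination hc + 2 ^ (n + 3) * hs⟩ hndvd
    · omega
  have hbΔ : (2 * u) ^ 2 - Δ = 2 ^ (n + 3 + 2) * c := by
    linear_combination 4 * hc - hm4
  have hC : ((2 * u) ^ 2 - Δ) / 2 ^ (n + 3 + 2) = c := by
    rw [hbΔ]; exact Int.mul_ediv_cancel_left _ (by positivity)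
  have hu1 : 1 ≤ u := hpos
  have hAC : (2:ℤ) ^ (n + 3) < c := by
    have habs : -Δ = |Δ| := (abs_of_neg hΔneg).symm
    have h2 : (2:ℤ) ^ (n + 3) * 2 ^ (n + 3) * 4 = 2 ^ (2 * (n + 3) + 2) := by ring
    have hm' : (2:ℤ) ^ (n + 3) * 2 ^ (n + 3) ≤ -m := by nlinarith
    have hu2 : 1 ≤ u ^ 2 := by nlinarith
    have : (2:ℤ) ^ (n + 3) * 2 ^ (n + 3) < 2 ^ (n + 3) * c := by nlinarith
    exact lt_of_mul_lt_mul_left this (le_of_lt hPpos)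
  refine ⟨2 * u, by omega, by omega, ⟨⟨u, rfl⟩, by omega⟩, ?_, ?_, ?_, ?_⟩
  · exact Int.modEq_iff_dvd.mpr ⟨c, hbΔ⟩
  · -- gcd = 1
    rw [hC]
    have hco : IsCoprime ((2:ℤ) ^ (n + 3)) c :=
      ((Int.prime_two.coprime_iff_not_dvd).mpr (by omega)).pow_left
    set g := Int.gcd (2 ^ (n + 3)) (Int.gcd (2 * u) c) with hg
    have hg1 : (g:ℤ) ∣ 2 ^ (n + 3) := Int.gcd_dvd_left _ _
    have hg2 : (g:ℤ) ∣ c := Int.dvd_trans (Int.gcd_dvd_right (2 ^ (n + 3)) (Int.gcd (2 * u) c)) (Int.gcd_dvd_right (2 * u) c)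
    have := Int.isUnit_iff.mp (hco.isUnit_of_dvd' hg1 hg2)
    omega
  · rw [hC]; linear_combination hbΔ
  · left
    refine ⟨by omega, by omega, ?_⟩
    rw [hC]; exact hAC
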